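/- Let (Ω, F, ℙ) be a probability space with a filtration (F_t)_{t∈ℝ₊} satisfying ⋁_t F_t ⊆ F. For every stopping time τ there exist a totally inaccessible stopping time τ¹ and an accessible stopping time τ² such that ⟦τ⟧ = ⟦τ¹⟧ ∪ ⟦τ²⟧. -/

import Mathlib

open MeasureTheory Set
open scoped NNReal ENNReal


variable {Ω : Type*}

/-- A stopping time with respect to the filtration `𝔽`. -/
def IsStopTime {F : MeasurableSpace Ω} (𝔽 : Filtration ℝ≥0 F) (τ : Ω → ℝ≥0∞) : Prop :=
  ∀ t : ℝ≥0, MeasurableSet[𝔽 t] {ω | τ ω ≤ (t : ℝ≥0∞)}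

/-- A predictable time: a stopping time announced by a nondecreasing sequence of
finite stopping times. -/
def IsPredTime {F : MeasurableSpace Ω} (𝔽 : Filtration ℝ≥0 F) (ρ : Ω → ℝ≥0∞) : Prop :=
  IsStopTime 𝔽 ρ ∧ ∃ ρs : ℕ → Ω → ℝ≥0∞,
    (∀ n, IsStopTime 𝔽 (ρs n)) ∧ (∀ n ω, ρs n ω < ⊤) ∧ (∀ n ω, ρs n ω ≤ ρ ω) ∧
    (∀ n ω, 0 < ρ ω → ρs n ω < ρ ω) ∧ (∀ ω, Monotone fun n => ρs n ω) ∧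
    (∀ ω, Filter.Tendsto (fun n => ρs n ω) Filter.atTop (nhds (ρ ω)))

/-- The graph `⟦τ⟧ ⊆ Ω × ℝ₊` of `τ : Ω → [0,∞]`. -/
def graph (τ : Ω → ℝ≥0∞) : Set (Ω × ℝ≥0) := {p | τ p.1 = (p.2 : ℝ≥0∞)}

/-- The stochastic interval `⟦τ, ∞⟦`. -/
def rayFrom (τ : Ω → ℝ≥0∞) : Set (Ω × ℝ≥0) := {p | τ p.1 ≤ (p.2 : ℝ≥0∞)}

/-- The stochastic interval `⟦ρ, τ⟧`. -/
def stInterval (ρ τ : Ω → ℝ≥0∞) : Set (Ω × ℝ≥0) :=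
  {p | ρ p.1 ≤ (p.2 : ℝ≥0∞) ∧ (p.2 : ℝ≥0∞) ≤ τ p.1}

/-- The predictable σ-algebra on `Ω × ℝ₊`. -/
def predictableSigma {F : MeasurableSpace Ω} (𝔽 : Filtration ℝ≥0 F) :
    MeasurableSpace (Ω × ℝ≥0) :=
  MeasurableSpace.generateFrom {s | ∃ ρ, IsPredTime 𝔽 ρ ∧ s = rayFrom ρ}

/-- The optional σ-algebra on `Ω × ℝ₊`. -/
def optionalSigma {F : MeasurableSpace Ω} (𝔽 : Filtration ℝ≥0 F) :
    MeasurableSpace (Ω × ℝ≥0) :=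
  MeasurableSpace.generateFrom {s | ∃ τ, IsStopTime 𝔽 τ ∧ s = rayFrom τ}

/-- The debut of a set `S ⊆ Ω × ℝ₊`. -/
noncomputable def debut (S : Set (Ω × ℝ≥0)) (ω : Ω) : ℝ≥0∞ :=
  ⨅ (t : ℝ≥0) (_ : (ω, t) ∈ S), (t : ℝ≥0∞)

/-- Projection of a subset of `Ω × ℝ₊` onto `Ω`. -/
def projOmega (S : Set (Ω × ℝ≥0)) : Set Ω := Prod.fst '' S

/-- The outer measure `ℙ*` induced by `ℙ`. -/
noncomputable def pstar {F : MeasurableSpace Ω} (P : Measure Ω) (A : Set Ω) : ℝ≥0∞ :=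
  ⨅ (E : Set Ω) (_ : A ⊆ E) (_ : MeasurableSet E), P E

/-- A totally inaccessible stopping time: `ℙ(τ = ρ < ∞) = 0` for every predictable
time `ρ`. -/
def IsTotallyInaccessible {Ω : Type*} {F : MeasurableSpace Ω} (𝔽 : Filtration ℝ≥0 F)
    (P : Measure Ω) (τ : Ω → ℝ≥0∞) : Prop :=
  IsStopTime 𝔽 τ ∧ ∀ ρ : Ω → ℝ≥0∞, IsPredTime 𝔽 ρ → P {ω | τ ω = ρ ω ∧ τ ω < ⊤} = 0

/-- An accessible stopping time: its graph is covered by countably many graphs of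
predictable times. -/
def IsAccessibleTime {Ω : Type*} {F : MeasurableSpace Ω} (𝔽 : Filtration ℝ≥0 F)
    (τ : Ω → ℝ≥0∞) : Prop :=
  IsStopTime 𝔽 τ ∧ ∃ ρs : ℕ → Ω → ℝ≥0∞,
    (∀ m, IsPredTime 𝔽 (ρs m)) ∧ graph τ ⊆ ⋃ m, graph (ρs m)

lemma isStopTime_top {F : MeasurableSpace Ω} (𝔽 : Filtration ℝ≥0 F) :
    IsStopTime 𝔽 (fun _ : Ω => (⊤ : ℝ≥0∞)) := by
  intro t
  simp

lemma isPredTime_top {F : MeasurableSpace Ω} (𝔽 : Filtration ℝ≥0 F) :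
    IsPredTime 𝔽 (fun _ : Ω => (⊤ : ℝ≥0∞)) := by
  refine ⟨isStopTime_top 𝔽, fun n _ => (n : ℝ≥0∞), fun n t => ?_, ?_, ?_, ?_, ?_, ?_⟩
  · exact MeasurableSet.const _
  · exact fun n ω => ENNReal.natCast_lt_top n
  · exact fun n ω => le_top
  · exact fun n ω _ => ENNReal.natCast_lt_top n
  · exact fun ω a b h => Nat.cast_le.2 h
  · exact fun ω => ENNReal.tendsto_nat_nhds_top

lemma IsStopTime.measurable {F : MeasurableSpace Ω} {𝔽 : Filtration ℝ≥0 F} {τ : Ω → ℝ≥0∞}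
    (hτ : IsStopTime 𝔽 τ) : Measurable[F] τ := by
  apply measurable_of_Iic
  intro x
  induction x using ENNReal.recTopCoe with
  | top => simp
  | coe t => exact (𝔽.le t) _ (hτ t)

lemma lt_and_le_measurable {F : MeasurableSpace Ω} {𝔽 : Filtration ℝ≥0 F} {σ ρ : Ω → ℝ≥0∞}
    (hσ : IsStopTime 𝔽 σ) (hρ : IsStopTime 𝔽 ρ) (t : ℝ≥0) :
    MeasurableSet[𝔽 t] {ω | σ ω < ρ ω ∧ ρ ω ≤ (t : ℝ≥0∞)} := by
  have key : {ω | σ ω < ρ ω ∧ ρ ω ≤ (t : ℝ≥0∞)} =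
      ⋃ q : ℚ, ({ω | σ ω ≤ ((min (Real.toNNReal q) t : ℝ≥0) : ℝ≥0∞)} ∩
        ({ω | ρ ω ≤ (t : ℝ≥0∞)} \ {ω | ρ ω ≤ ((min (Real.toNNReal q) t : ℝ≥0) : ℝ≥0∞)})) := by
    ext ω
    simp only [mem_iUnion, mem_inter_iff, mem_diff, mem_setOf_eq]
    constructor
    · rintro ⟨hlt, hle⟩
      obtain ⟨q, -, hq1, hq2⟩ := ENNReal.lt_iff_exists_rat_btwn.1 hlt
      have hqt : (Real.toNNReal q) ≤ t := by
        have := hq2.trans_le hle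
        exact_mod_cast this.le
      refine ⟨q, ?_, hle, ?_⟩
      · rw [min_eq_left hqt]; exact hq1.le
      · rw [min_eq_left hqt]; exact not_le.2 hq2
    · rintro ⟨q, h1, h2, h3⟩
      exact ⟨h1.trans_lt (not_le.1 h3), h2⟩
  rw [key]
  refine MeasurableSet.iUnion fun q => ?_
  have hm : (min (Real.toNNReal q) t : ℝ≥0) ≤ t := min_le_right _ _
  exact ((𝔽.mono hm _ (hσ _))).inter ((hρ t).diff (𝔽.mono hm _ (hρ _)))

lemma eq_and_le_measurable {F : MeasurableSpace Ω} {𝔽 : Filtration ℝ≥0 F} {σ ρ : Ω → ℝ≥0∞}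
    (hσ : IsStopTime 𝔽 σ) (hρ : IsStopTime 𝔽 ρ) (t : ℝ≥0) :
    MeasurableSet[𝔽 t] {ω | σ ω = ρ ω ∧ σ ω ≤ (t : ℝ≥0∞)} := by
  have key : {ω | σ ω = ρ ω ∧ σ ω ≤ (t : ℝ≥0∞)} =
      ({ω | σ ω ≤ (t : ℝ≥0∞)} ∩ {ω | ρ ω ≤ (t : ℝ≥0∞)}) \
        ({ω | σ ω < ρ ω ∧ ρ ω ≤ (t : ℝ≥0∞)} ∪ {ω | ρ ω < σ ω ∧ σ ω ≤ (t : ℝ≥0∞)}) := by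
    ext ω
    simp only [mem_diff, mem_inter_iff, mem_union, mem_setOf_eq, not_or]
    constructor
    · rintro ⟨heq, hle⟩
      exact ⟨⟨hle, heq ▸ hle⟩, fun h => absurd heq h.1.ne, fun h => absurd heq.symm h.1.ne⟩
    · rintro ⟨⟨h1, h2⟩, h3, h4⟩
      refine ⟨le_antisymm ?_ ?_, h1⟩
      · by_contra h; exact h4 ⟨not_le.1 h, h1⟩
      · by_contra h; exact h3 ⟨not_le.1 h, h2⟩
  rw [key]
  exact ((hσ t).inter (hρ t)).diff
    ((lt_and_le_measurable hσ hρ t).union (lt_and_le_measurable hρ hσ t))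

/-- every stopping time decomposes as a totally inaccessible part and an
accessible part: `⟦τ⟧ = ⟦τ¹⟧ ∪ ⟦τ²⟧`. -/
theorem stoppingTime_decomposition {Ω : Type*} {F : MeasurableSpace Ω}
    (𝔽 : Filtration ℝ≥0 F) (P : Measure Ω) [IsProbabilityMeasure P]
    (τ : Ω → ℝ≥0∞) (hτ : IsStopTime 𝔽 τ) :
    ∃ τ₁ τ₂ : Ω → ℝ≥0∞, IsTotallyInaccessible 𝔽 P τ₁ ∧ IsAccessibleTime 𝔽 τ₂ ∧
      graph τ = graph τ₁ ∪ graph τ₂ := by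
  classical
  set PT : Set (Ω → ℝ≥0∞) := {ρ | IsPredTime 𝔽 ρ} with hPT
  have hPTne : Nonempty PT := ⟨⟨fun _ => ⊤, isPredTime_top 𝔽⟩⟩
  set A : (Ω → ℝ≥0∞) → Set Ω := fun ρ => {ω | τ ω = ρ ω ∧ τ ω < ⊤} with hA
  have hAmeas : ∀ ρ : PT, MeasurableSet[F] (A ρ.1) := by
    rintro ⟨ρ, hρ⟩
    have h1 : Measurable[F] τ := hτ.measurable
    have h2 : Measurable[F] ρ := hρ.1.measurable
    have heq : {ω | τ ω = ρ ω} = {ω | τ ω ≤ ρ ω} ∩ {ω | ρ ω ≤ τ ω} := by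
      ext ω; simp [le_antisymm_iff]
    have : MeasurableSet[F] {ω | τ ω = ρ ω} := by
      rw [heq]; exact (measurableSet_le h1 h2).inter (measurableSet_le h2 h1)
    exact this.inter (h1 measurableSet_Iio)
  set B : (ℕ → PT) → Set Ω := fun f => ⋃ m, A (f m).1 with hB
  have hBmeas : ∀ f, MeasurableSet[F] (B f) := fun f => MeasurableSet.iUnion fun m => hAmeas _
  set S : Set ℝ≥0∞ := range (fun f : ℕ → PT => P (B f)) with hS
  have hSne : S.Nonempty := range_nonempty _
  obtain ⟨u, hu_mono, hu_tend, hu_mem⟩ := exists_seq_tendsto_sSup hSne (OrderTop.bddAbove S)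
  choose g hg using hu_mem
  set Fam : ℕ → PT := fun k => g (Nat.unpair k).1 (Nat.unpair k).2 with hFam
  set N : Set Ω := B Fam with hN
  have hNmeas : MeasurableSet[F] N := hBmeas Fam
  -- P N = sSup S
  have hPN_le : P N ≤ sSup S := le_sSup ⟨Fam, rfl⟩
  have hPN_ge : sSup S ≤ P N := by
    refine le_of_tendsto hu_tend (Filter.Eventually.of_forall fun n => ?_)
    rw [← hg n]
    refine measure_mono ?_
    intro ω hω
    obtain ⟨m, hm⟩ := mem_iUnion.1 hω
    exact mem_iUnion.2 ⟨Nat.pair n m, by simpa [hFam, Nat.unpair_pair] using hm⟩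
  have hPN : P N = sSup S := le_antisymm hPN_le hPN_ge
  -- key : null outside
  have key : ∀ ρ : Ω → ℝ≥0∞, IsPredTime 𝔽 ρ → P (A ρ \ N) = 0 := by
    intro ρ hρ
    set f' : ℕ → PT := fun k => if k = 0 then ⟨ρ, hρ⟩ else Fam (k - 1) with hf'
    have hBf' : B f' = A ρ ∪ N := by
      apply Subset.antisymm
      · intro ω hω
        obtain ⟨m, hm⟩ := mem_iUnion.1 hω
        by_cases h : m = 0
        · left; simpa [hf', h] using hm
        · right; exact mem_iUnion.2 ⟨m - 1, by simpa [hf', h] using hm⟩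
      · rintro ω (hω | hω)
        · exact mem_iUnion.2 ⟨0, by simpa [hf'] using hω⟩
        · obtain ⟨m, hm⟩ := mem_iUnion.1 hω
          exact mem_iUnion.2 ⟨m + 1, by simpa [hf'] using hm⟩
    have hle : P (A ρ ∪ N) ≤ P N := by
      rw [hPN, ← hBf']; exact le_sSup ⟨f', rfl⟩
    have hdisj : Disjoint N (A ρ \ N) := disjoint_sdiff_self_right
    have hmeasd : MeasurableSet[F] (A ρ \ N) := (hAmeas ⟨ρ, hρ⟩).diff hNmeas
    have hunion : N ∪ (A ρ \ N) = A ρ ∪ N := by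
      rw [union_diff_self]; exact union_comm _ _
    have := measure_union (μ := P) hdisj hmeasd
    rw [hunion] at this
    have h2 : P N + P (A ρ \ N) ≤ P N + 0 := by
      rw [add_zero, ← this]; exact hle
    have := (ENNReal.add_le_add_iff_left (measure_ne_top P N)).1 h2
    exact le_antisymm this zero_le
  -- define the two times
  set τ₁ : Ω → ℝ≥0∞ := fun ω => if ω ∈ N then ⊤ else τ ω with hτ₁
  set τ₂ : Ω → ℝ≥0∞ := fun ω => if ω ∈ N then τ ω else ⊤ with hτ₂
  have hNt : ∀ t : ℝ≥0, MeasurableSet[𝔽 t] (N ∩ {ω | τ ω ≤ (t : ℝ≥0∞)}) := by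
    intro t
    have : N ∩ {ω | τ ω ≤ (t : ℝ≥0∞)} =
        ⋃ m, {ω | τ ω = (Fam m).1 ω ∧ τ ω ≤ (t : ℝ≥0∞)} := by
      ext ω
      simp only [hN, hB, mem_inter_iff, mem_iUnion, mem_setOf_eq, hA]
      constructor
      · rintro ⟨⟨m, hm1, -⟩, hle⟩; exact ⟨m, hm1, hle⟩
      · rintro ⟨m, hm1, hle⟩
        exact ⟨⟨m, hm1, lt_of_le_of_lt hle (ENNReal.coe_lt_top)⟩, hle⟩
    rw [this]
    exact MeasurableSet.iUnion fun m => eq_and_le_measurable hτ ((Fam m).2).1 t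
  have hst1 : IsStopTime 𝔽 τ₁ := by
    intro t
    have : {ω | τ₁ ω ≤ (t : ℝ≥0∞)} =
        {ω | τ ω ≤ (t : ℝ≥0∞)} \ (N ∩ {ω | τ ω ≤ (t : ℝ≥0∞)}) := by
      ext ω
      by_cases h : ω ∈ N <;> simp [hτ₁, h]
    rw [this]
    exact (hτ t).diff (hNt t)
  have hst2 : IsStopTime 𝔽 τ₂ := by
    intro t
    have : {ω | τ₂ ω ≤ (t : ℝ≥0∞)} = N ∩ {ω | τ ω ≤ (t : ℝ≥0∞)} := by
      ext ω
      by_cases h : ω ∈ N <;> simp [hτ₂, h]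
    rw [this]
    exact hNt t
  refine ⟨τ₁, τ₂, ⟨hst1, ?_⟩, ⟨hst2, fun m => ((Fam m).1), fun m => (Fam m).2, ?_⟩, ?_⟩
  · intro ρ hρ
    refine measure_mono_null ?_ (key ρ hρ)
    intro ω hω
    obtain ⟨heq, hlt⟩ := hω
    by_cases h : ω ∈ N
    · simp [hτ₁, h] at hlt
    · simp only [hτ₁, h, if_false] at heq hlt
      exact ⟨⟨heq, hlt⟩, h⟩
  · rintro ⟨ω, t⟩ hp
    have h : τ₂ ω = (t : ℝ≥0∞) := hp
    by_cases hω : ω ∈ N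
    · have hτω : τ ω = (t : ℝ≥0∞) := by simpa [hτ₂, hω] using h
      obtain ⟨m, hm1, -⟩ := mem_iUnion.1 hω
      exact mem_iUnion.2 ⟨m, show (Fam m).1 ω = (t : ℝ≥0∞) from hm1 ▸ hτω⟩
    · simp [hτ₂, hω] at h
  · ext ⟨ω, t⟩
    simp only [graph, mem_union, mem_setOf_eq]
    by_cases h : ω ∈ N <;> simp [hτ₁, hτ₂, h]
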